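/- Let f : ℝ → ℝ be C¹ with f and f' bounded, let x₀ be a point where f' attains its maximum M = f'(x₀) with M < 1, and define N₂ = -(c/(2π)) PV ∫_ℝ ((f'(x₀) - Δ_α f(x₀))/(x₀ - α)²)·Q(x₀,α) dα with Q(x₀,α) = 2(1 + f'(x₀)·Δ_α f(x₀))/(1 + (Δ_α f(x₀))²)², c > 0, and Δ_α f(x₀) = (f(x₀)-f(α))/(x₀-α). Assuming the principal value integral converges, N₂ ≤ 0. -/

import Mathlib

open MeasureTheory

/-- Core of Lemma 5.1: with ‖f'‖_∞ = M < 1 attained at x₀ and c > 0, the term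
N₂ = -(c/(2π)) ∫ ((f'(x₀) - Δ_α f(x₀))/(x₀-α)²)·Q(x₀,α) dα is nonpositive. -/
theorem muskat_N2_nonpositive (f : ℝ → ℝ) (x₀ M c : ℝ)
    (hf : ContDiff ℝ 1 f) (hfb : ∃ C, ∀ x, |f x| ≤ C)
    (hM : deriv f x₀ = M) (hbd : ∀ x, |deriv f x| ≤ M) (hM1 : M < 1) (hc : 0 < c)
    (hconv : Integrable fun α : ℝ =>
      (deriv f x₀ - (f x₀ - f α) / (x₀ - α)) / (x₀ - α) ^ 2 *
        (2 * (1 + deriv f x₀ * ((f x₀ - f α) / (x₀ - α))) /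
          (1 + ((f x₀ - f α) / (x₀ - α)) ^ 2) ^ 2)) :
    -(c / (2 * Real.pi)) *
      (∫ α : ℝ, (deriv f x₀ - (f x₀ - f α) / (x₀ - α)) / (x₀ - α) ^ 2 *
        (2 * (1 + deriv f x₀ * ((f x₀ - f α) / (x₀ - α))) /
          (1 + ((f x₀ - f α) / (x₀ - α)) ^ 2) ^ 2)) ≤ 0 := by
  have hM0 : 0 ≤ M := le_trans (abs_nonneg _) (hbd x₀)
  -- Lipschitz bound: |f x - f y| ≤ M |x - y|
  have hlip : ∀ x y : ℝ, |f x - f y| ≤ M * |x - y| := by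
    intro x y
    have hdiff : ∀ z ∈ (Set.univ : Set ℝ), DifferentiableAt ℝ f z := fun z _ =>
      (hf.differentiable one_ne_zero) z
    have := (convex_univ : Convex ℝ (Set.univ : Set ℝ)).norm_image_sub_le_of_norm_deriv_le
      (fun z hz => hdiff z hz) (fun z _ => by simpa using hbd z) (Set.mem_univ y) (Set.mem_univ x)
    simpa [Real.norm_eq_abs] using this
  have hslope : ∀ α : ℝ, |(f x₀ - f α) / (x₀ - α)| ≤ M := by
    intro α
    rcases eq_or_ne α x₀ with h | h
    · simp [h, hM0]
    · have hne : x₀ - α ≠ 0 := sub_ne_zero.mpr (Ne.symm h)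
      rw [abs_div, div_le_iff₀ (abs_pos.mpr hne)]
      exact hlip x₀ α
  have hint : 0 ≤ ∫ α : ℝ, (deriv f x₀ - (f x₀ - f α) / (x₀ - α)) / (x₀ - α) ^ 2 *
        (2 * (1 + deriv f x₀ * ((f x₀ - f α) / (x₀ - α))) /
          (1 + ((f x₀ - f α) / (x₀ - α)) ^ 2) ^ 2) := by
    apply integral_nonneg
    intro α
    set Δ : ℝ := (f x₀ - f α) / (x₀ - α) with hΔ
    have h1 : 0 ≤ (deriv f x₀ - Δ) / (x₀ - α) ^ 2 := by
      apply div_nonneg _ (sq_nonneg _)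
      rw [hM]
      have := hslope α
      linarith [neg_abs_le Δ, le_abs_self Δ]
    have h2 : 0 ≤ 2 * (1 + deriv f x₀ * Δ) / (1 + Δ ^ 2) ^ 2 := by
      apply div_nonneg _ (sq_nonneg _)
      have habs : |deriv f x₀ * Δ| ≤ M * M := by
        rw [abs_mul]
        exact mul_le_mul (hbd x₀) (hslope α) (abs_nonneg _) hM0
      have : M * M < 1 := by nlinarith
      nlinarith [neg_abs_le (deriv f x₀ * Δ)]
    exact mul_nonneg h1 h2
  apply mul_nonpos_of_nonpos_of_nonneg _ hint
  have : 0 ≤ c / (2 * Real.pi) := div_nonneg hc.le (by positivity)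
  linarith
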